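/- arXiv:math/0410175 — 2 statements merged into one kernel-verified Lean document; each statement's English description precedes it below -/
import Mathlib

section
/- The sequence of Beta(n,n) distributions on [0,1] satisfies, with speed u_n = 1/n, the large deviation principle with good rate function Î(x) = −ln(x − x²) − ln 4 for x ∈ (0,1) and Î(x) = +∞ for x ∈ {0,1}. -/
open MeasureTheory Filter Topology Matrix ProbabilityTheory
open scoped ENNReal NNReal Classical

noncomputable section

/-- The unit interval `[0,1]` as a subtype of `ℝ`. -/
abbrev I01 : Type := (Set.Icc (0:ℝ) 1)

/-- `c_k(μ)`, the `k`-th power moment of a probability measure on `[0,1]`. -/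
def momentP (μ : ProbabilityMeasure I01) (k : ℕ) : ℝ := ∫ x, (x : ℝ) ^ k ∂(μ : Measure I01)

/-- `c^{(n)}(μ) = (c_1(μ),…,c_n(μ))`, the vector of the first `n` moments. -/
def momVec (n : ℕ) (μ : ProbabilityMeasure I01) : Fin n → ℝ := fun i => momentP μ ((i : ℕ) + 1)

/-- The `n`-th moment space `M_n ⊆ ℝ^n`. -/
def Mset (n : ℕ) : Set (Fin n → ℝ) := Set.range (momVec n)

/-- `P_n`, the uniform (normalized Lebesgue) probability on `M_n`. -/
def Pn (n : ℕ) : Measure (Fin n → ℝ) := (volume (Mset n))⁻¹ • volume.restrict (Mset n)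

/-- `c^+(c) = max {t : (c,t) ∈ M_{k+1}}`. -/
def cplus {k : ℕ} (c : Fin k → ℝ) : ℝ := sSup {t : ℝ | Fin.snoc c t ∈ Mset (k + 1)}

/-- `c^-(c) = min {t : (c,t) ∈ M_{k+1}}`. -/
def cminus {k : ℕ} (c : Fin k → ℝ) : ℝ := sInf {t : ℝ | Fin.snoc c t ∈ Mset (k + 1)}

/-- The arcsine law `ν(dx) = dx / (π √(x(1-x)))` on `[0,1]`. -/
def arcsine : Measure I01 :=
  volume.withDensity fun x => ENNReal.ofReal (1 / (Real.pi * Real.sqrt ((x:ℝ) * (1 - (x:ℝ)))))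

/-- `σ_n^+(d)`: the unique probability measure with first `n` moments `d` and maximal
`(n+1)`-th moment (junk value if `d ∉ M_n`). -/
def sigmaPlus (n : ℕ) (d : Fin n → ℝ) : ProbabilityMeasure I01 :=
  if h : ∃ μ : ProbabilityMeasure I01, momVec n μ = d ∧ momentP μ (n + 1) = cplus d then h.choose
  else ⟨Measure.dirac ⟨0, Set.left_mem_Icc.mpr zero_le_one⟩, inferInstance⟩

/-- Kullback information `K(P,Q) = ∫ log (dP/dQ) dP` if `P ≪ Q` and `log dP/dQ ∈ L¹(P)`,
`+∞` otherwise (valued in `[0,∞]`; for probability measures the integral is nonnegative). -/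
def kullback (P Q : Measure I01) : ℝ≥0∞ :=
  if P ≪ Q ∧ Integrable (llr P Q) P then ENNReal.ofReal (∫ x, llr P Q x ∂P) else ⊤

/-- A sequence of (outer) measures `R n` satisfies the LDP with speed `u` and rate `I`. -/
def IsLDP {U : Type*} [TopologicalSpace U] (R : ℕ → Set U → ℝ≥0∞) (u : ℕ → ℝ) (I : U → EReal) :
    Prop :=
  LowerSemicontinuous I ∧
  ∀ A : Set U,
    -(⨅ x ∈ interior A, I x) ≤ liminf (fun n => ((u n : ℝ) : EReal) * ENNReal.log (R n A)) atTop ∧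
    limsup (fun n => ((u n : ℝ) : EReal) * ENNReal.log (R n A)) atTop ≤ -(⨅ x ∈ closure A, I x)

/-- Goodness of a rate function: all sublevel sets are compact. -/
def GoodRate {U : Type*} [TopologicalSpace U] (I : U → EReal) : Prop :=
  ∀ a : ℝ, IsCompact {x : U | I x ≤ (a : EReal)}

/-- Convexity of a rate function on `P([0,1])`, via convex combinations of measures. -/
def ConvexRateProb (I : ProbabilityMeasure I01 → EReal) : Prop :=
  ∀ (μ μ₁ μ₂ : ProbabilityMeasure I01) (a b : ℝ), 0 ≤ a → 0 ≤ b → a + b = 1 →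
    (μ : Measure I01) = ENNReal.ofReal a • (μ₁ : Measure I01) + ENNReal.ofReal b • (μ₂ : Measure I01) →
    I μ ≤ (a : EReal) * I μ₁ + (b : EReal) * I μ₂

/-- Projection keeping the first `k` coordinates (junk `0` where undefined). -/
def projk (k n : ℕ) (c : Fin n → ℝ) : Fin k → ℝ :=
  fun i => if h : (i : ℕ) < n then c ⟨i, h⟩ else 0

/-- `c̄^{(k)}`: the vector of the first `k` moments of the arcsine law. -/
def cbar (k : ℕ) : Fin k → ℝ := fun i => ∫ x, (x : ℝ) ^ ((i : ℕ) + 1) ∂arcsine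

/-- The lower-triangular matrix `A_k` with entries `a_{ij} = 2^{-2i+1} C(2i, i-j)`
(`1`-based indices). -/
def Amat (k : ℕ) : Matrix (Fin k) (Fin k) ℝ :=
  fun i j => if (j : ℕ) ≤ (i : ℕ) then
    (2 : ℝ) ^ (-(2 * (i : ℕ) + 1) : ℤ) * (Nat.choose (2 * ((i : ℕ) + 1)) ((i : ℕ) - (j : ℕ)))
  else 0

/-- `Σ_k = (1/2) A_k A_kᵀ`. -/
def Sigmak (k : ℕ) : Matrix (Fin k) (Fin k) ℝ := (1 / 2 : ℝ) • (Amat k * (Amat k)ᵀ)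

/-- `J_k(x) = (1/2) xᵀ Σ_k⁻¹ x`. -/
def Jk (k : ℕ) (x : Fin k → ℝ) : ℝ := (1 / 2 : ℝ) * (x ⬝ᵥ ((Sigmak k)⁻¹ *ᵥ x))

/-- Unnormalized beta density `x^{a-1}(1-x)^{b-1}` (natural parameters). -/
def betaDen (a b : ℕ) (x : I01) : ℝ≥0∞ :=
  ENNReal.ofReal ((x : ℝ) ^ (a - 1) * (1 - (x : ℝ)) ^ (b - 1))

/-- The beta distribution `β(a,b)` on `[0,1]` with natural parameters. -/
def betaM (a b : ℕ) : Measure I01 :=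
  (∫⁻ x, betaDen a b x ∂volume)⁻¹ • volume.withDensity (betaDen a b)

/-- `ln : ℝ → [-∞,∞]` with the convention `ln t = -∞` for `t ≤ 0`. -/
def elog (x : ℝ) : EReal := if x ≤ 0 then ⊥ else ((Real.log x : ℝ) : EReal)

/-- `exp(-x)` for `x ∈ [0,∞]`, with `exp(-∞) = 0`. -/
def expNeg (x : ℝ≥0∞) : ℝ := if x = ⊤ then 0 else Real.exp (-(x.toReal))

/-- `exp : [-∞,∞] → [0,∞]`. -/
def expE (x : EReal) : ℝ≥0∞ :=
  if x = ⊥ then 0 else if x = ⊤ then ⊤ else ENNReal.ofReal (Real.exp x.toReal)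

/-- The first `m` coordinates of `c : Fin n → ℝ` (`m ≤ n`). -/
def truncMom {n : ℕ} (c : Fin n → ℝ) (m : ℕ) (h : m ≤ n) : Fin m → ℝ :=
  fun j => c ⟨j, lt_of_lt_of_le j.2 h⟩

/-- The vector of the first `k` canonical moments of `c` (junk outside `int M_n`). -/
def canMomVec (k : ℕ) {n : ℕ} (c : Fin n → ℝ) : Fin k → ℝ := fun i =>
  if h : (i : ℕ) < n then
    (c ⟨i, h⟩ - cminus (truncMom c i h.le)) /
      (cplus (truncMom c i h.le) - cminus (truncMom c i h.le))
  else 0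

/-- `F(μ) = ∫ f₀ dμ`. -/
def F0int (f0 : C(I01, ℝ)) (μ : ProbabilityMeasure I01) : ℝ := ∫ x, f0 x ∂(μ : Measure I01)

/-- The tilted law `Q̃_n(B) = E[exp(nF(μ_n)) 1_B(μ_n)] / E[exp(nF(μ_n))]`, as a set function. -/
def Qtil (f0 : C(I01, ℝ)) (n : ℕ) (B : Set (ProbabilityMeasure I01)) : ℝ≥0∞ :=
  (∫⁻ c, ENNReal.ofReal (Real.exp (n * F0int f0 (sigmaPlus n c))) ∂(Pn n))⁻¹ *
    ∫⁻ c in sigmaPlus n ⁻¹' B, ENNReal.ofReal (Real.exp (n * F0int f0 (sigmaPlus n c))) ∂(Pn n)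

/-- `∫ ln g dν` valued in `[-∞,∞)`, with the convention `ln t = -∞` on `{t ≤ 0}`. -/
def nuLogInt (g : I01 → ℝ) : EReal :=
  ((∫⁻ x, ENNReal.ofReal (Real.log (g x)) ∂arcsine : ℝ≥0∞) : EReal) -
    ((∫⁻ x, (if g x ≤ 0 then (⊤ : ℝ≥0∞) else ENNReal.ofReal (-Real.log (g x))) ∂arcsine :
      ℝ≥0∞) : EReal)

end

section Statements
open MeasureTheory Filter Topology Matrix ProbabilityTheory
open scoped ENNReal NNReal

/-- The rate function of Lemma 4.3, on `[0,1]`. -/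
noncomputable def betaRate (x : I01) : EReal :=
  if (x : ℝ) = 0 ∨ (x : ℝ) = 1 then ⊤
  else ((-Real.log ((x : ℝ) * (1 - (x : ℝ))) - Real.log 4 : ℝ) : EReal)

namespace Stmt7Aux

/-- The quadratic `x(1-x)` on the unit interval. -/
noncomputable def g (x : I01) : ℝ := (x : ℝ) * (1 - (x : ℝ))

lemma g_nonneg (x : I01) : 0 ≤ g x := mul_nonneg x.2.1 (by linarith [x.2.2])

lemma g_le_quarter (x : I01) : g x ≤ 1 / 4 := by
  have := x.2.1; have := x.2.2
  unfold g
  nlinarith [sq_nonneg ((x : ℝ) - 1 / 2)]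

lemma g_eq_zero_iff (x : I01) : g x = 0 ↔ ((x : ℝ) = 0 ∨ (x : ℝ) = 1) := by
  unfold g
  rw [mul_eq_zero, sub_eq_zero]
  constructor
  · rintro (h | h); · exact Or.inl h
    · exact Or.inr h.symm
  · rintro (h | h); · exact Or.inl h
    · exact Or.inr h.symm

lemma continuous_g : Continuous g := by
  unfold g; fun_prop

lemma betaRate_eq_of_ne (x : I01) (hx : g x ≠ 0) :
    betaRate x = ((-Real.log (g x) - Real.log 4 : ℝ) : EReal) := by
  rw [betaRate, if_neg]
  · rfl
  · rw [← g_eq_zero_iff]; exact hx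

lemma betaRate_eq_top (x : I01) (hx : g x = 0) : betaRate x = ⊤ := by
  rw [betaRate, if_pos ((g_eq_zero_iff x).1 hx)]

lemma betaRate_ne_bot (x : I01) : (⊥ : EReal) < betaRate x := by
  by_cases hx : g x = 0
  · rw [betaRate_eq_top x hx]; exact bot_lt_top
  · rw [betaRate_eq_of_ne x hx]; exact EReal.bot_lt_coe _

lemma betaRate_antitone {x y : I01} (h : g y ≤ g x) : betaRate x ≤ betaRate y := by
  by_cases hy : g y = 0
  · rw [betaRate_eq_top y hy]; exact le_top
  · have hy' : 0 < g y := lt_of_le_of_ne (g_nonneg y) (Ne.symm hy)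
    have hx' : 0 < g x := lt_of_lt_of_le hy' h
    rw [betaRate_eq_of_ne x hx'.ne', betaRate_eq_of_ne y hy'.ne', EReal.coe_le_coe_iff]
    have := (Real.log_le_log_iff hy' hx').2 h
    linarith

/-- Lower semicontinuity of the rate function. -/
lemma betaRate_lsc : LowerSemicontinuous betaRate := by
  intro x₀ y hy
  by_cases hx₀ : g x₀ = 0
  · -- boundary point: betaRate x₀ = ⊤
    induction y with
    | bot => filter_upwards with x; exact betaRate_ne_bot x
    | coe c =>
        have hg0 : Tendsto g (𝓝 x₀) (𝓝 0) := by
          simpa [ContinuousAt, hx₀] using (continuous_g.continuousAt (x := x₀))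
        have hδpos : (0:ℝ) < Real.exp (-(c + Real.log 4 + 1)) := Real.exp_pos _
        have hev : ∀ᶠ x in 𝓝 x₀, g x < Real.exp (-(c + Real.log 4 + 1)) :=
          hg0.eventually (eventually_lt_nhds hδpos)
        filter_upwards [hev] with x hx
        by_cases hgx : g x = 0
        · rw [betaRate_eq_top x hgx]; exact EReal.coe_lt_top c
        · have hgx' : 0 < g x := lt_of_le_of_ne (g_nonneg x) (Ne.symm hgx)
          rw [betaRate_eq_of_ne x hgx, gt_iff_lt, EReal.coe_lt_coe_iff]
          have hlog : Real.log (g x) < -(c + Real.log 4 + 1) := by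
            have := Real.log_lt_log hgx' hx
            rwa [Real.log_exp] at this
          linarith
    | top => rw [betaRate_eq_top x₀ hx₀] at hy; exact absurd hy (lt_irrefl _)
  · -- interior point: continuity
    have hx₀' : 0 < g x₀ := lt_of_le_of_ne (g_nonneg x₀) (Ne.symm hx₀)
    have hev : ∀ᶠ x in 𝓝 x₀, 0 < g x :=
      (continuous_g.continuousAt (x := x₀)).eventually (eventually_gt_nhds hx₀')
    have hevEq : betaRate =ᶠ[𝓝 x₀]
        fun x => ((-Real.log (g x) - Real.log 4 : ℝ) : EReal) := by
      filter_upwards [hev] with x hx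
      exact betaRate_eq_of_ne x hx.ne'
    have h1 : ContinuousAt (fun x : I01 => -Real.log (g x) - Real.log 4) x₀ :=
      (((Real.continuousAt_log hx₀).comp continuous_g.continuousAt).neg).sub
        continuousAt_const
    have h2 : ContinuousAt (fun x : I01 =>
        ((-Real.log (g x) - Real.log 4 : ℝ) : EReal)) x₀ :=
      continuous_coe_real_ereal.continuousAt.comp h1
    exact (h2.congr hevEq.symm).lowerSemicontinuousAt y hy

/-! ### Measure-theoretic facts -/

/-- Normalization constant of `β(n,n)`. -/
noncomputable def Z (n : ℕ) : ℝ≥0∞ := ∫⁻ x, betaDen n n x ∂(volume : Measure I01)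

lemma betaDen_eq (n : ℕ) (x : I01) :
    betaDen n n x = ENNReal.ofReal ((g x) ^ (n - 1)) := by
  rw [betaDen, g, mul_pow]

lemma volume_I01_def : (volume : Measure I01) = Measure.comap Subtype.val volume := rfl

lemma coe_embedding : MeasurableEmbedding ((↑) : I01 → ℝ) :=
  MeasurableEmbedding.subtype_coe measurableSet_Icc

lemma volume_I01_apply (s : Set I01) :
    (volume : Measure I01) s = volume (((↑) : I01 → ℝ) '' s) := by
  rw [volume_I01_def, coe_embedding.comap_apply]

lemma volume_I01_univ : (volume : Measure I01) Set.univ = 1 := by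
  rw [volume_I01_apply, Set.image_univ, Subtype.range_coe, Real.volume_Icc]
  norm_num

lemma volume_I01_preimage_Icc {a b : ℝ} (h0 : 0 ≤ a) (hab : a ≤ b) (hb : b ≤ 1) :
    (volume : Measure I01) (((↑) : I01 → ℝ) ⁻¹' Set.Icc a b) = ENNReal.ofReal (b - a) := by
  rw [volume_I01_apply, Subtype.image_preimage_coe]
  rw [Set.inter_eq_right.2 (Set.Icc_subset_Icc h0 hb), Real.volume_Icc]

lemma betaM_apply (n : ℕ) {A : Set I01} (hA : MeasurableSet A) :
    betaM n n A = (Z n)⁻¹ * ∫⁻ x in A, betaDen n n x ∂volume := by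
  rw [betaM, Measure.smul_apply, withDensity_apply _ hA, smul_eq_mul, Z]

lemma int_upper (n : ℕ) {K : Set I01} (hK : MeasurableSet K) {s : ℝ} (hs : 0 ≤ s)
    (h : ∀ x ∈ K, g x ≤ s) :
    ∫⁻ x in K, betaDen n n x ∂volume ≤ ENNReal.ofReal (s ^ (n - 1)) := by
  calc ∫⁻ x in K, betaDen n n x ∂volume
      ≤ ∫⁻ _ in K, ENNReal.ofReal (s ^ (n - 1)) ∂volume := by
        refine setLIntegral_mono' hK fun x hx => ?_
        rw [betaDen_eq]
        exact ENNReal.ofReal_le_ofReal (pow_le_pow_left₀ (g_nonneg x) (h x hx) _)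
    _ = ENNReal.ofReal (s ^ (n - 1)) * (volume : Measure I01) K :=
        setLIntegral_const K _
    _ ≤ ENNReal.ofReal (s ^ (n - 1)) * 1 := by
        refine mul_le_mul_right ?_ _
        rw [← volume_I01_univ]
        exact measure_mono (Set.subset_univ K)
    _ = ENNReal.ofReal (s ^ (n - 1)) := mul_one _

lemma int_lower (n : ℕ) {a b r : ℝ} (h0 : 0 ≤ a) (hab : a ≤ b) (hb : b ≤ 1)
    (hr : 0 ≤ r) (h : ∀ x ∈ Set.Icc a b, r ≤ x * (1 - x)) :
    ENNReal.ofReal ((b - a) * r ^ (n - 1)) ≤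
      ∫⁻ x in (((↑) : I01 → ℝ) ⁻¹' Set.Icc a b), betaDen n n x ∂volume := by
  have hT : MeasurableSet (((↑) : I01 → ℝ) ⁻¹' Set.Icc a b) :=
    measurableSet_Icc.preimage measurable_subtype_coe
  calc ENNReal.ofReal ((b - a) * r ^ (n - 1))
      = ENNReal.ofReal (r ^ (n - 1)) * (volume : Measure I01)
          (((↑) : I01 → ℝ) ⁻¹' Set.Icc a b) := by
        rw [volume_I01_preimage_Icc h0 hab hb, ← ENNReal.ofReal_mul (by positivity),
          mul_comm]
    _ = ∫⁻ _ in (((↑) : I01 → ℝ) ⁻¹' Set.Icc a b),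
          ENNReal.ofReal (r ^ (n - 1)) ∂volume := (setLIntegral_const _ _).symm
    _ ≤ ∫⁻ x in (((↑) : I01 → ℝ) ⁻¹' Set.Icc a b), betaDen n n x ∂volume := by
        refine setLIntegral_mono' hT fun x hx => ?_
        rw [betaDen_eq]
        exact ENNReal.ofReal_le_ofReal (pow_le_pow_left₀ hr (h _ hx) _)

lemma Z_le (n : ℕ) : Z n ≤ ENNReal.ofReal ((1 / 4 : ℝ) ^ (n - 1)) := by
  rw [Z, ← setLIntegral_univ]
  exact int_upper n MeasurableSet.univ (by norm_num) fun x _ => g_le_quarter x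

lemma Z_ge (n : ℕ) {ε : ℝ} (hε : 0 < ε) (hε4 : ε < 1 / 4) :
    ENNReal.ofReal ((2 * Real.sqrt ε) * (1 / 4 - ε) ^ (n - 1)) ≤ Z n := by
  have hsq : Real.sqrt ε < 1 / 2 := by
    rw [show (1/2 : ℝ) = Real.sqrt (1/4) by
      rw [show (1/4 : ℝ) = (1/2)^2 by norm_num, Real.sqrt_sq (by norm_num)]]
    exact Real.sqrt_lt_sqrt hε.le hε4
  have hsqpos : 0 < Real.sqrt ε := Real.sqrt_pos.2 hε
  have key := int_lower n (a := 1/2 - Real.sqrt ε) (b := 1/2 + Real.sqrt ε)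
    (r := 1/4 - ε) (by linarith) (by linarith) (by linarith) (by linarith)
    (fun x hx => by
      have h1 : (x - 1/2)^2 ≤ ε := by
        have h2 : |x - 1/2| ≤ Real.sqrt ε := by
          rw [abs_le]; constructor <;> [linarith [hx.1]; linarith [hx.2]]
        calc (x - 1/2)^2 = |x - 1/2|^2 := (sq_abs _).symm
          _ ≤ Real.sqrt ε ^ 2 := by
              exact pow_le_pow_left₀ (abs_nonneg _) h2 2
          _ = ε := Real.sq_sqrt hε.le
      nlinarith)
  calc ENNReal.ofReal ((2 * Real.sqrt ε) * (1 / 4 - ε) ^ (n - 1))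
      = ENNReal.ofReal (((1/2 + Real.sqrt ε) - (1/2 - Real.sqrt ε)) * (1/4 - ε) ^ (n - 1)) := by
        ring_nf
    _ ≤ ∫⁻ x in (((↑) : I01 → ℝ) ⁻¹' Set.Icc (1/2 - Real.sqrt ε) (1/2 + Real.sqrt ε)),
          betaDen n n x ∂volume := key
    _ ≤ Z n := setLIntegral_le_lintegral _ _

/-! ### The basic limit computation -/

lemma tendsto_aux {C ρ : ℝ} (hC : 0 < C) (hρ : 0 < ρ) :
    Tendsto (fun n : ℕ => ((1 / (n : ℝ) : ℝ) : EReal) *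
        ENNReal.log (ENNReal.ofReal (C * ρ ^ (n - 1)))) atTop
      (𝓝 ((Real.log ρ : ℝ) : EReal)) := by
  have key : ∀ n : ℕ, ((1 / (n : ℝ) : ℝ) : EReal) *
      ENNReal.log (ENNReal.ofReal (C * ρ ^ (n - 1))) =
      (((1 / (n : ℝ)) * Real.log (C * ρ ^ (n - 1)) : ℝ) : EReal) := by
    intro n
    rw [ENNReal.log_ofReal_of_pos (by positivity), EReal.coe_mul]
  simp only [key]
  rw [EReal.tendsto_coe]
  have hev : ∀ᶠ n : ℕ in atTop, (1 / (n : ℝ)) * Real.log C + (1 - 1 / (n : ℝ)) * Real.log ρ =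
      (1 / (n : ℝ)) * Real.log (C * ρ ^ (n - 1)) := by
    filter_upwards [eventually_ge_atTop 1] with n hn
    have hnpos : (0:ℝ) < (n:ℝ) := by exact_mod_cast hn
    rw [Real.log_mul hC.ne' (by positivity), Real.log_pow]
    have : ((n - 1 : ℕ) : ℝ) = (n : ℝ) - 1 := by
      rw [Nat.cast_sub hn]; simp
    rw [this]
    field_simp
  refine Tendsto.congr' hev ?_
  have h0 : Tendsto (fun n : ℕ => 1 / (n : ℝ)) atTop (𝓝 0) :=
    tendsto_one_div_atTop_nhds_zero_nat
  have := ((h0.mul_const (Real.log C)).add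
    (((tendsto_const_nhds (x := (1:ℝ))).sub h0).mul_const (Real.log ρ)))
  simpa using this

lemma limsup_le_aux {u v : ℕ → EReal} {L : EReal} (h : ∀ᶠ n in atTop, u n ≤ v n)
    (hv : Tendsto v atTop (𝓝 L)) : Filter.limsup u atTop ≤ L :=
  hv.limsup_eq ▸ Filter.limsup_le_limsup h

lemma le_liminf_aux {u v : ℕ → EReal} {L : EReal} (h : ∀ᶠ n in atTop, v n ≤ u n)
    (hv : Tendsto v atTop (𝓝 L)) : L ≤ Filter.liminf u atTop :=
  hv.liminf_eq ▸ Filter.liminf_le_liminf h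

lemma mul_log_le {x y : ℝ≥0∞} (h : x ≤ y) (n : ℕ) :
    ((1 / (n : ℝ) : ℝ) : EReal) * ENNReal.log x ≤
      ((1 / (n : ℝ) : ℝ) : EReal) * ENNReal.log y :=
  mul_le_mul_of_nonneg_left (ENNReal.log_monotone h)
    (EReal.coe_nonneg.2 (by positivity))

lemma limsup_of_zero {A : Set I01} (h : ∀ n, betaM n n A = 0) :
    Filter.limsup (fun n : ℕ => ((1 / (n : ℝ) : ℝ) : EReal) *
      ENNReal.log (betaM n n A)) atTop ≤ ⊥ := by
  refine Filter.limsup_le_of_le (by isBoundedDefault) ?_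
  filter_upwards [eventually_ge_atTop 1] with n hn
  rw [h n, ENNReal.log_zero]
  refine le_of_eq (EReal.coe_mul_bot_of_pos ?_)
  have : (0:ℝ) < (n:ℝ) := by exact_mod_cast hn
  positivity

end Stmt7Aux

open Stmt7Aux in
theorem stmt7 :
    IsLDP (fun n A => betaM n n A) (fun n => 1 / (n : ℝ)) betaRate ∧ GoodRate betaRate := by
  refine ⟨⟨betaRate_lsc, fun A => ⟨?_, ?_⟩⟩, ?_⟩
  · -- lower bound
    rw [EReal.neg_le]
    refine le_iInf₂ fun x₀ hx₀ => ?_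
    by_cases hg : g x₀ = 0
    · rw [betaRate_eq_top _ hg]; exact le_top
    · refine EReal.neg_le.mpr ?_
      have hg' : 0 < g x₀ := lt_of_le_of_ne (g_nonneg x₀) (Ne.symm hg)
      have h01 : 0 < (x₀:ℝ) := by
        rcases eq_or_lt_of_le x₀.2.1 with h | h
        · exfalso; rw [g, ← h] at hg'; simp at hg'
        · exact h
      have h11 : (x₀:ℝ) < 1 := by
        rcases eq_or_lt_of_le x₀.2.2 with h | h
        · exfalso; rw [g, h] at hg'; simp at hg'
        · exact h
      have main : ∀ k : ℕ,
          ((Real.log (4 * (g x₀ * (((k:ℝ)+1)/((k:ℝ)+2)))) : ℝ) : EReal) ≤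
            Filter.liminf (fun n : ℕ => ((1 / (n : ℝ) : ℝ) : EReal) *
              ENNReal.log (betaM n n A)) atTop := by
        intro k
        have hk2 : (0:ℝ) < (k:ℝ) + 2 := by positivity
        set ε : ℝ := g x₀ / ((k:ℝ)+2) with hε_def
        have hεpos : 0 < ε := by positivity
        have hεlt : ε < g x₀ := by
          rw [hε_def, div_lt_iff₀ hk2]; nlinarith
        set r : ℝ := g x₀ - ε with hr_def
        have hrpos : 0 < r := by simp only [hr_def]; linarith
        have hr_eq : r = g x₀ * (((k:ℝ)+1)/((k:ℝ)+2)) := by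
          rw [hr_def, hε_def]; field_simp; ring
        obtain ⟨δ₁, hδ₁pos, hball⟩ := Metric.isOpen_iff.1 isOpen_interior x₀ hx₀
        have hevg : ∀ᶠ x in 𝓝 x₀, r < g x :=
          continuous_g.continuousAt.eventually (eventually_gt_nhds (by linarith))
        obtain ⟨δ₂, hδ₂pos, hδ₂⟩ := Metric.eventually_nhds_iff.1 hevg
        set δ : ℝ := min δ₁ δ₂ with hδ_def
        have hδpos : 0 < δ := lt_min hδ₁pos hδ₂pos
        set a : ℝ := max ((x₀:ℝ) - δ/2) ((x₀:ℝ)/2) with ha_def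
        set b : ℝ := min ((x₀:ℝ) + δ/2) (((x₀:ℝ)+1)/2) with hb_def
        have ha0 : 0 ≤ a := le_trans (by linarith) (le_max_right _ _)
        have hax : a < (x₀:ℝ) := max_lt (by linarith) (by linarith)
        have hxb : (x₀:ℝ) < b := lt_min (by linarith) (by linarith)
        have hb1 : b ≤ 1 := le_trans (min_le_right _ _) (by linarith)
        have hsubball : ∀ y : I01, (y:ℝ) ∈ Set.Icc a b → dist y x₀ < δ := by
          intro y hy
          have h1 : (x₀:ℝ) - δ/2 ≤ a := le_max_left _ _
          have h2 : b ≤ (x₀:ℝ) + δ/2 := min_le_left _ _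
          rw [Subtype.dist_eq, Real.dist_eq, abs_sub_lt_iff]
          constructor <;> [linarith [hy.2]; linarith [hy.1]]
        have hgood : ∀ x ∈ Set.Icc a b, r ≤ x * (1 - x) := by
          intro x hx
          have hx01 : x ∈ Set.Icc (0:ℝ) 1 := ⟨le_trans ha0 hx.1, le_trans hx.2 hb1⟩
          exact (hδ₂ (lt_of_lt_of_le (hsubball ⟨x, hx01⟩ hx) (min_le_right _ _))).le
        have hTsub : (((↑) : I01 → ℝ) ⁻¹' Set.Icc a b) ⊆ A := fun y hy =>
          interior_subset (hball (Metric.mem_ball.2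
            (lt_of_lt_of_le (hsubball y hy) (min_le_left _ _))))
        have hT : MeasurableSet (((↑) : I01 → ℝ) ⁻¹' Set.Icc a b) :=
          measurableSet_Icc.preimage measurable_subtype_coe
        have hbound : ∀ n, ENNReal.ofReal ((b - a) * (4*r)^(n-1)) ≤ betaM n n A := by
          intro n
          calc ENNReal.ofReal ((b - a) * (4*r)^(n-1))
              = (ENNReal.ofReal ((1/4:ℝ)^(n-1)))⁻¹ *
                  ENNReal.ofReal ((b - a) * r^(n-1)) := by
                rw [← ENNReal.ofReal_inv_of_pos (by positivity),
                  ← ENNReal.ofReal_mul (by positivity)]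
                congr 1
                rw [mul_pow, one_div, inv_pow, inv_inv]
                ring
            _ ≤ (Z n)⁻¹ * ∫⁻ x in (((↑) : I01 → ℝ) ⁻¹' Set.Icc a b),
                  betaDen n n x ∂volume :=
                mul_le_mul' (ENNReal.inv_le_inv.2 (Z_le n))
                  (int_lower n ha0 (hax.trans hxb).le hb1 hrpos.le hgood)
            _ = betaM n n (((↑) : I01 → ℝ) ⁻¹' Set.Icc a b) := (betaM_apply n hT).symm
            _ ≤ betaM n n A := measure_mono hTsub
        have htendv := tendsto_aux (C := b - a) (ρ := 4*r) (by linarith) (by linarith)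
        have hfin := le_liminf_aux
          (Filter.Eventually.of_forall fun n => mul_log_le (hbound n) n) htendv
        rw [hr_eq] at hfin
        exact hfin
      have hquot : Tendsto (fun k : ℕ => ((k:ℝ)+1)/((k:ℝ)+2)) atTop (𝓝 1) := by
        have h0 : Tendsto (fun k : ℕ => 1/((k:ℝ)+2)) atTop (𝓝 0) := by
          refine squeeze_zero (fun k => by positivity) (fun k => ?_)
            tendsto_one_div_add_atTop_nhds_zero_nat
          refine one_div_le_one_div_of_le (by positivity) (by linarith)
        have hEq : ∀ k : ℕ, 1 - 1/((k:ℝ)+2) = ((k:ℝ)+1)/((k:ℝ)+2) := by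
          intro k
          have hk2 : ((k:ℝ)+2) ≠ 0 := by positivity
          field_simp
          ring
        have := (tendsto_const_nhds (x := (1:ℝ)) (f := atTop)).sub h0
        rw [sub_zero] at this
        exact Tendsto.congr hEq this
      have harg : Tendsto (fun k : ℕ => 4 * (g x₀ * (((k:ℝ)+1)/((k:ℝ)+2)))) atTop
          (𝓝 (4 * g x₀)) := by
        have := (tendsto_const_nhds (x := g x₀) (f := atTop)).mul hquot
        rw [mul_one] at this
        have h4 := (tendsto_const_nhds (x := (4:ℝ)) (f := atTop)).mul this
        exact h4
      have hlog : Tendsto (fun k : ℕ =>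
          ((Real.log (4 * (g x₀ * (((k:ℝ)+1)/((k:ℝ)+2)))) : ℝ) : EReal)) atTop
          (𝓝 ((Real.log (4 * g x₀) : ℝ) : EReal)) := by
        rw [EReal.tendsto_coe]
        exact ((Real.continuousAt_log (by positivity)).tendsto).comp harg
      have final := le_of_tendsto' hlog main
      have hid : -betaRate x₀ = ((Real.log (4 * g x₀) : ℝ) : EReal) := by
        rw [betaRate_eq_of_ne _ hg, ← EReal.coe_neg, EReal.coe_eq_coe_iff,
          Real.log_mul (by norm_num) hg'.ne']
        have : Real.log 4 = Real.log 4 := rfl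
        ring
      rw [hid]
      exact final
  · -- upper bound
    by_cases hA : A = ∅
    · subst hA
      rw [closure_empty, iInf_emptyset]
      refine le_trans (limsup_of_zero fun n => measure_empty) ?_
      simp
    · have hne : (closure A).Nonempty := (Set.nonempty_iff_ne_empty.2 hA).closure
      obtain ⟨xs, hxsK, hmax⟩ := (isClosed_closure (s := A)).isCompact.exists_isMaxOn hne
        continuous_g.continuousOn
      have hinf : ⨅ x ∈ closure A, betaRate x = betaRate xs :=
        le_antisymm (iInf₂_le xs hxsK) (le_iInf₂ fun x hx => betaRate_antitone (hmax hx))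
      rw [hinf]
      by_cases hs : g xs = 0
      · rw [betaRate_eq_top _ hs]
        have hnull : (volume : Measure I01) (closure A) = 0 := by
          have hsub : closure A ⊆ (((↑) : I01 → ℝ) ⁻¹' {0, 1}) := by
            intro x hx
            have : g x = 0 := le_antisymm (hs ▸ hmax hx) (g_nonneg x)
            exact (g_eq_zero_iff x).1 this
          refine measure_mono_null hsub ?_
          rw [volume_I01_apply]
          refine measure_mono_null (Set.image_preimage_subset _ _) ?_
          exact ((Set.finite_singleton (1:ℝ)).insert 0).measure_zero _
        have hz : ∀ n, betaM n n A = 0 := by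
          intro n
          have h1 : betaM n n A ≤ betaM n n (closure A) := measure_mono subset_closure
          have h2 : betaM n n (closure A) = 0 := by
            rw [betaM, Measure.smul_apply, smul_eq_mul,
              (withDensity_absolutelyContinuous volume (betaDen n n)) hnull, mul_zero]
          exact le_antisymm (h1.trans h2.le) zero_le
        calc Filter.limsup (fun n : ℕ => ((1 / (n : ℝ) : ℝ) : EReal) *
            ENNReal.log (betaM n n A)) atTop ≤ ⊥ := limsup_of_zero hz
          _ = -⊤ := by rw [EReal.neg_top]
      · have hs' : 0 < g xs := lt_of_le_of_ne (g_nonneg xs) (Ne.symm hs)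
        have main : ∀ k : ℕ,
            Filter.limsup (fun n : ℕ => ((1 / (n : ℝ) : ℝ) : EReal) *
              ENNReal.log (betaM n n A)) atTop ≤
            ((Real.log (g xs) - Real.log (1/4 - 1/(4*((k:ℝ)+2))) : ℝ) : EReal) := by
          intro k
          have hk2 : (0:ℝ) < (k:ℝ) + 2 := by positivity
          set ε : ℝ := 1/(4*((k:ℝ)+2)) with hε_def
          have hεpos : 0 < ε := by positivity
          have hε4 : ε < 1/4 := by
            rw [hε_def, div_lt_div_iff₀ (by positivity) (by norm_num)]
            nlinarith
          set r : ℝ := 1/4 - ε with hr_def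
          have hrpos : 0 < r := by simp only [hr_def]; linarith
          have hsqpos : 0 < Real.sqrt ε := Real.sqrt_pos.2 hεpos
          have hbound : ∀ n, betaM n n A ≤
              ENNReal.ofReal ((2 * Real.sqrt ε)⁻¹ * (g xs / r)^(n-1)) := by
            intro n
            calc betaM n n A ≤ betaM n n (closure A) := measure_mono subset_closure
              _ = (Z n)⁻¹ * ∫⁻ x in closure A, betaDen n n x ∂volume :=
                  betaM_apply n (isClosed_closure (s := A)).measurableSet
              _ ≤ (ENNReal.ofReal ((2 * Real.sqrt ε) * r^(n-1)))⁻¹ *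
                    ENNReal.ofReal ((g xs)^(n-1)) :=
                  mul_le_mul' (ENNReal.inv_le_inv.2 (Z_ge n hεpos hε4))
                    (int_upper n (isClosed_closure (s := A)).measurableSet hs'.le
                      fun x hx => hmax hx)
              _ = ENNReal.ofReal ((2 * Real.sqrt ε)⁻¹ * (g xs / r)^(n-1)) := by
                  rw [← ENNReal.ofReal_inv_of_pos (by positivity),
                    ← ENNReal.ofReal_mul (by positivity)]
                  congr 1
                  rw [div_pow, mul_inv]
                  field_simp
          have htendv := tendsto_aux (C := (2 * Real.sqrt ε)⁻¹) (ρ := g xs / r)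
            (by positivity) (by positivity)
          have hfin := limsup_le_aux
            (Filter.Eventually.of_forall fun n => mul_log_le (hbound n) n) htendv
          rwa [Real.log_div hs'.ne' hrpos.ne'] at hfin
        have hεt : Tendsto (fun k : ℕ => 1/(4*((k:ℝ)+2))) atTop (𝓝 0) := by
          refine squeeze_zero (fun k => by positivity) (fun k => ?_)
            tendsto_one_div_add_atTop_nhds_zero_nat
          refine one_div_le_one_div_of_le (by positivity) (by linarith)
        have hrt : Tendsto (fun k : ℕ => (1/4 - 1/(4*((k:ℝ)+2)) : ℝ)) atTop (𝓝 (1/4)) := by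
          have := (tendsto_const_nhds (x := (1/4:ℝ)) (f := atTop)).sub hεt
          rwa [sub_zero] at this
        have hlogt : Tendsto (fun k : ℕ =>
            ((Real.log (g xs) - Real.log (1/4 - 1/(4*((k:ℝ)+2))) : ℝ) : EReal)) atTop
            (𝓝 ((Real.log (g xs) + Real.log 4 : ℝ) : EReal)) := by
          rw [EReal.tendsto_coe]
          have h2 : Tendsto (fun k : ℕ => Real.log (1/4 - 1/(4*((k:ℝ)+2)))) atTop
              (𝓝 (Real.log (1/4))) :=
            ((Real.continuousAt_log (by norm_num)).tendsto).comp hrt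
          have h3 := (tendsto_const_nhds (x := Real.log (g xs)) (f := atTop)).sub h2
          have h4 : Real.log (g xs) - Real.log (1/4) = Real.log (g xs) + Real.log 4 := by
            rw [one_div, Real.log_inv]; ring
          rwa [h4] at h3
        have final := ge_of_tendsto' hlogt main
        have hid : -betaRate xs = ((Real.log (g xs) + Real.log 4 : ℝ) : EReal) := by
          rw [betaRate_eq_of_ne _ hs, ← EReal.coe_neg, EReal.coe_eq_coe_iff]
          ring
        rw [hid]
        exact final
  · -- goodness
    intro a
    exact (betaRate_lsc.isClosed_preimage (a : EReal)).isCompact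

end Statements
end

section
/- Let (u_n) be a sequence of positive reals decreasing to 0 with 1/n = o(u_n) (i.e. n·u_n → ∞), and let l ∈ ℕ be fixed. For n > l let Y_n be a random variable with Beta(n−l, n−l) distribution and set X_n := √(n u_n)(Y_n − 1/2). Then (X_n) satisfies, on ℝ with speed (u_n), the large deviation principle with good rate function J_1(x) = 4x². -/
open MeasureTheory Filter Topology Matrix ProbabilityTheory
open scoped ENNReal NNReal Classical

noncomputable section
namespace Stmt8Proof
open Real Set

def Fd (k : ℕ) (y : ℝ) : ℝ≥0∞ := ENNReal.ofReal ((y*(1-y))^k)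

lemma measurable_Fd (k : ℕ) : Measurable (Fd k) := by
  apply Measurable.ennreal_ofReal; fun_prop

lemma sq_ident (k : ℕ) (y : ℝ) : (y*(1-y))^k = (1/4 : ℝ)^k * (1 - 4*(y-1/2)^2)^k := by
  rw [← mul_pow]; congr 1; ring

lemma pow_le_exp_aux {z : ℝ} (k : ℕ) (hz0 : 0 ≤ z) (hz1 : z ≤ 1) :
    (1 - z)^k ≤ Real.exp (-((k:ℝ)*z)) := by
  have h1 : (1 - z) ≤ Real.exp (-z) := by linarith [Real.add_one_le_exp (-z)]
  calc (1-z)^k ≤ (Real.exp (-z))^k := pow_le_pow_left₀ (by linarith) h1 k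
    _ = Real.exp (-((k:ℝ)*z)) := by rw [← Real.exp_nat_mul]; ring_nf

lemma exp_le_pow_aux {z : ℝ} (k : ℕ) (hz0 : 0 ≤ z) (hz : z ≤ 1/2) :
    Real.exp (-((k:ℝ)*(z + 2*z^2))) ≤ (1 - z)^k := by
  have h1 : Real.exp (-(z + 2*z^2)) ≤ 1 - z := by
    have h2 := Real.add_one_le_exp (z + 2*z^2)
    have h3 := Real.exp_pos (z + 2*z^2)
    rw [Real.exp_neg, inv_eq_one_div, div_le_iff₀ h3]
    nlinarith [mul_le_mul_of_nonneg_left h2 (show (0:ℝ) ≤ 1 - z by linarith)]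
  calc Real.exp (-((k:ℝ)*(z + 2*z^2))) = (Real.exp (-(z+2*z^2)))^k := by
        rw [← Real.exp_nat_mul]; ring_nf
    _ ≤ (1-z)^k := pow_le_pow_left₀ (Real.exp_pos _).le h1 k

lemma lintegral_gauss (b : ℝ) (hb : 0 < b) (c : ℝ) :
    ∫⁻ x : ℝ, ENNReal.ofReal (Real.exp (-(b * (x - c)^2))) = ENNReal.ofReal (Real.sqrt (π / b)) := by
  rw [← ofReal_integral_eq_lintegral_ofReal]
  · congr 1
    rw [integral_sub_right_eq_self (fun x => Real.exp (-(b * x^2))) c]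
    simpa [neg_mul] using integral_gaussian b
  · exact ((integrable_exp_neg_mul_sq hb).comp_sub_right c).congr (by simp [neg_mul])
  · exact Filter.Eventually.of_forall fun x => (Real.exp_pos _).le

lemma tail_upper (k : ℕ) (hk : 1 ≤ k) (τ θ : ℝ) (hτ : 0 ≤ τ) (hθ : 0 < θ) (hθ1 : θ ≤ 1) :
    ∫⁻ y in {y : ℝ | τ ≤ |y - 1/2|} ∩ Icc 0 1, Fd k y
      ≤ ENNReal.ofReal ((1/4)^k * Real.exp (-((1-θ)*(4*(k:ℝ))*τ^2)) * Real.sqrt (π / (4*θ*k))) := by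
  have hb : (0:ℝ) < 4*θ*k := by positivity
  have step1 : ∀ y ∈ {y : ℝ | τ ≤ |y - 1/2|} ∩ Icc 0 1,
      Fd k y ≤ ENNReal.ofReal (((1/4)^k * Real.exp (-((1-θ)*(4*(k:ℝ))*τ^2))) *
        Real.exp (-((4*θ*(k:ℝ)) * (y - 1/2)^2))) := by
    rintro y ⟨hy1, hy2, hy3⟩
    simp only [Set.mem_setOf_eq] at hy1
    have hz0 : 0 ≤ 4*(y-1/2)^2 := by positivity
    have hz1 : 4*(y-1/2)^2 ≤ 1 := by nlinarith
    have hτz : τ^2 ≤ (y-1/2)^2 := by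
      have := abs_nonneg (y - 1/2)
      nlinarith [sq_abs (y - 1/2)]
    apply ENNReal.ofReal_le_ofReal
    rw [sq_ident]
    rw [mul_assoc, ← Real.exp_add]
    apply mul_le_mul_of_nonneg_left _ (by positivity)
    calc (1 - 4*(y-1/2)^2)^k ≤ Real.exp (-((k:ℝ) * (4*(y-1/2)^2))) := pow_le_exp_aux k hz0 hz1
      _ ≤ Real.exp (-((1-θ)*(4*(k:ℝ))*τ^2) + -((4*θ*(k:ℝ)) * (y - 1/2)^2)) := by
        apply Real.exp_le_exp.mpr
        nlinarith [mul_le_mul_of_nonneg_left hτz (show (0:ℝ) ≤ (1-θ)*(4*(k:ℝ)) from mul_nonneg (by linarith) (by positivity))]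
  calc ∫⁻ y in {y : ℝ | τ ≤ |y - 1/2|} ∩ Icc 0 1, Fd k y
      ≤ ∫⁻ y in {y : ℝ | τ ≤ |y - 1/2|} ∩ Icc 0 1,
          ENNReal.ofReal (((1/4)^k * Real.exp (-((1-θ)*(4*(k:ℝ))*τ^2))) *
            Real.exp (-((4*θ*(k:ℝ)) * (y - 1/2)^2))) := setLIntegral_mono (by fun_prop) step1
    _ ≤ ∫⁻ y : ℝ, ENNReal.ofReal (((1/4)^k * Real.exp (-((1-θ)*(4*(k:ℝ))*τ^2))) *
            Real.exp (-((4*θ*(k:ℝ)) * (y - 1/2)^2))) := setLIntegral_le_lintegral _ _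
    _ = ENNReal.ofReal ((1/4)^k * Real.exp (-((1-θ)*(4*(k:ℝ))*τ^2)) * Real.sqrt (π / (4*θ*k))) := by
        simp_rw [ENNReal.ofReal_mul (by positivity :
          (0:ℝ) ≤ (1/4)^k * Real.exp (-((1-θ)*(4*(k:ℝ))*τ^2)))]
        rw [lintegral_const_mul _ (by fun_prop), lintegral_gauss _ hb,
          ← ENNReal.ofReal_mul (by positivity)]

lemma D_upper (k : ℕ) (hk : 1 ≤ k) :
    ∫⁻ y in Icc (0:ℝ) 1, Fd k y ≤ ENNReal.ofReal ((1/4)^k * Real.sqrt (π / (4*(k:ℝ)))) := by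
  have h := tail_upper k hk 0 1 le_rfl one_pos le_rfl
  have hset : {y : ℝ | (0:ℝ) ≤ |y - 1/2|} = Set.univ := by ext y; simp [abs_nonneg]
  rw [hset, Set.univ_inter] at h
  refine h.trans (ENNReal.ofReal_le_ofReal ?_)
  norm_num

lemma interval_lower (k : ℕ) (a b : ℝ) (hab : a ≤ b) (h0 : 0 ≤ a) (h1 : b ≤ 1) (ζ : ℝ)
    (hζ : ∀ y ∈ Icc a b, 4*(y-1/2)^2 ≤ ζ) (hζ2 : ζ ≤ 1/2) (hζ0 : 0 ≤ ζ) :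
    ENNReal.ofReal ((b-a) * ((1/4)^k * Real.exp (-((k:ℝ)*(ζ + 2*ζ^2))))) ≤
      ∫⁻ y in Icc a b, Fd k y := by
  have step : ∀ y ∈ Icc a b,
      ENNReal.ofReal ((1/4)^k * Real.exp (-((k:ℝ)*(ζ + 2*ζ^2)))) ≤ Fd k y := by
    intro y hy
    obtain ⟨hya, hyb⟩ := hy
    have hz0 : 0 ≤ 4*(y-1/2)^2 := by positivity
    have hzζ : 4*(y-1/2)^2 ≤ ζ := hζ y ⟨hya, hyb⟩
    apply ENNReal.ofReal_le_ofReal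
    rw [sq_ident]
    apply mul_le_mul_of_nonneg_left _ (by positivity)
    calc Real.exp (-((k:ℝ)*(ζ + 2*ζ^2)))
        ≤ Real.exp (-((k:ℝ)*((4*(y-1/2)^2) + 2*(4*(y-1/2)^2)^2))) := by
          apply Real.exp_le_exp.mpr
          have hzz : 4*(y-1/2)^2 + 2*(4*(y-1/2)^2)^2 ≤ ζ + 2*ζ^2 := by
            nlinarith [mul_nonneg (show (0:ℝ) ≤ ζ - 4*(y-1/2)^2 by linarith) (show (0:ℝ) ≤ ζ + 4*(y-1/2)^2 by linarith)]
          nlinarith [mul_le_mul_of_nonneg_left hzz (Nat.cast_nonneg (α := ℝ) k)]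
      _ ≤ (1 - 4*(y-1/2)^2)^k := exp_le_pow_aux k hz0 (le_trans hzζ hζ2)
  calc ENNReal.ofReal ((b-a) * ((1/4)^k * Real.exp (-((k:ℝ)*(ζ + 2*ζ^2)))))
      = ENNReal.ofReal ((1/4)^k * Real.exp (-((k:ℝ)*(ζ + 2*ζ^2)))) * volume (Icc a b) := by
        rw [Real.volume_Icc, ← ENNReal.ofReal_mul (by positivity), mul_comm]
    _ = ∫⁻ _ in Icc a b, ENNReal.ofReal ((1/4)^k * Real.exp (-((k:ℝ)*(ζ + 2*ζ^2)))) := by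
        rw [setLIntegral_const]
    _ ≤ ∫⁻ y in Icc a b, Fd k y := setLIntegral_mono (measurable_Fd k) step

lemma D_lower (k : ℕ) (hk : 1 ≤ k) :
    ENNReal.ofReal ((1/Real.sqrt (2*(k:ℝ))) * ((1/4)^k * Real.exp (-(1:ℝ)))) ≤
      ∫⁻ y in Icc (0:ℝ) 1, Fd k y := by
  have hk' : (1:ℝ) ≤ (k:ℝ) := by exact_mod_cast hk
  set ε : ℝ := 1/(2*Real.sqrt (2*(k:ℝ))) with hε
  have hsq : (1:ℝ) ≤ Real.sqrt (2*(k:ℝ)) := by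
    rw [show (1:ℝ) = Real.sqrt 1 by simp]; exact Real.sqrt_le_sqrt (by linarith)
  have hsqpos : (0:ℝ) < Real.sqrt (2*(k:ℝ)) := by linarith
  have hεpos : 0 < ε := by positivity
  have hεhalf : ε ≤ 1/2 := by
    rw [hε, div_le_div_iff₀ (by linarith) (by norm_num)]; linarith
  have hεsq : ε^2 = 1/(4*(2*(k:ℝ))) := by
    rw [hε, div_pow, mul_pow, Real.sq_sqrt (by linarith)]; ring_nf
  have key := interval_lower k (1/2 - ε) (1/2 + ε) (by linarith) (by linarith) (by linarith)
    (1/(2*(k:ℝ)))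
    (fun y hy => by
      obtain ⟨hy1, hy2⟩ := hy
      have : (y - 1/2)^2 ≤ ε^2 := by nlinarith
      rw [hεsq] at this; rw [show 1/(2*(k:ℝ)) = 4 * (1/(4*(2*(k:ℝ)))) by ring]
      linarith)
    (by rw [div_le_div_iff₀ (by linarith) (by norm_num)]; linarith)
    (by positivity)
  refine le_trans ?_ (le_trans key (lintegral_mono_set (Icc_subset_Icc (by linarith) (by linarith))))
  apply ENNReal.ofReal_le_ofReal
  have h2 : (1/2 + ε) - (1/2 - ε) = 2*ε := by ring
  rw [h2]
  have hexp : Real.exp (-(1:ℝ)) ≤ Real.exp (-((k:ℝ)*(1/(2*(k:ℝ)) + 2*(1/(2*(k:ℝ)))^2))) := by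
    apply Real.exp_le_exp.mpr
    have hkpos : (0:ℝ) < k := by linarith
    rw [neg_le_neg_iff]
    have : (k:ℝ)*(1/(2*(k:ℝ)) + 2*(1/(2*(k:ℝ)))^2) = 1/2 + 1/(2*(k:ℝ)) := by
      field_simp
    rw [this]
    have : 1/(2*(k:ℝ)) ≤ 1/2 := by rw [div_le_div_iff₀ (by linarith) (by norm_num)]; linarith
    linarith
  have h2ε : 2*ε = 1/Real.sqrt (2*(k:ℝ)) := by rw [hε]; field_simp
  rw [h2ε]
  gcongr

lemma betaDen_eq (k : ℕ) (x : I01) : betaDen (k+1) (k+1) x = Fd k ↑x := by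
  simp [betaDen, Fd, mul_pow]

lemma lint_fd_whole (k : ℕ) :
    ∫⁻ x : I01, betaDen (k+1) (k+1) x ∂volume = ∫⁻ y in Icc (0:ℝ) 1, Fd k y := by
  simp_rw [betaDen_eq]
  rw [show (volume : Measure I01) = volume.comap Subtype.val from rfl]
  exact lintegral_subtype_comap measurableSet_Icc _

lemma lint_fd_pre (k : ℕ) (T : Set ℝ) :
    ∫⁻ x : I01 in (Subtype.val ⁻¹' T), betaDen (k+1) (k+1) x ∂volume
      = ∫⁻ y in T ∩ Icc (0:ℝ) 1, Fd k y := by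
  simp_rw [betaDen_eq]
  rw [show (volume : Measure I01) = volume.comap Subtype.val from rfl,
    setLIntegral_subtype measurableSet_Icc _ (Fd k)]
  congr 1
  rw [Subtype.image_preimage_coe, Set.inter_comm]

lemma betaM_pre (k : ℕ) (T : Set ℝ) (hT : MeasurableSet T) :
    betaM (k+1) (k+1) (Subtype.val ⁻¹' T)
      = (∫⁻ y in Icc (0:ℝ) 1, Fd k y)⁻¹ * ∫⁻ y in T ∩ Icc (0:ℝ) 1, Fd k y := by
  rw [betaM, Measure.smul_apply, smul_eq_mul, lint_fd_whole,
    withDensity_apply _ (measurable_subtype_coe hT), ← lint_fd_pre]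

lemma betaM_le_one (k : ℕ) (S : Set I01) : betaM (k+1) (k+1) S ≤ 1 := by
  refine le_trans (measure_mono (Set.subset_univ S)) ?_
  have : (Set.univ : Set I01) = Subtype.val ⁻¹' (Set.univ : Set ℝ) := rfl
  rw [this, betaM_pre k _ MeasurableSet.univ, Set.univ_inter]
  exact ENNReal.inv_mul_le_one _

lemma mass_upper (k : ℕ) (hk : 1 ≤ k) (τ θ : ℝ) (hτ : 0 ≤ τ) (hθ : 0 < θ) (hθ1 : θ ≤ 1) :
    betaM (k+1) (k+1) {x : I01 | τ ≤ |(x:ℝ) - 1/2|}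
      ≤ ENNReal.ofReal (Real.exp 1 * Real.sqrt (π/(2*θ)) * Real.exp (-((1-θ)*(4*(k:ℝ))*τ^2))) := by
  have hk' : (1:ℝ) ≤ (k:ℝ) := by exact_mod_cast hk
  have hkpos : (0:ℝ) < k := by linarith
  set T : Set ℝ := {y : ℝ | τ ≤ |y - 1/2|} with hT
  have hTm : MeasurableSet T := by
    have : T = (fun y : ℝ => |y - 1/2|) ⁻¹' (Ici τ) := rfl
    rw [this]; exact (by fun_prop : Measurable fun y : ℝ => |y - 1/2|) measurableSet_Ici
  have hset : {x : I01 | τ ≤ |(x:ℝ) - 1/2|} = Subtype.val ⁻¹' T := rfl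
  rw [hset, betaM_pre k T hTm]
  set L : ℝ := (1/Real.sqrt (2*(k:ℝ))) * ((1/4)^k * Real.exp (-(1:ℝ))) with hL
  have hLpos : 0 < L := by positivity
  have hsqpos : (0:ℝ) < Real.sqrt (2*(k:ℝ)) := Real.sqrt_pos.mpr (by linarith)
  have h1 : (∫⁻ y in Icc (0:ℝ) 1, Fd k y)⁻¹ ≤ ENNReal.ofReal L⁻¹ := by
    rw [ENNReal.ofReal_inv_of_pos hLpos]
    exact ENNReal.inv_le_inv' (D_lower k hk)
  set A : ℝ := (1/4)^k * Real.exp (-((1-θ)*(4*(k:ℝ))*τ^2)) * Real.sqrt (π / (4*θ*k)) with hA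
  have h2 := tail_upper k hk τ θ hτ hθ hθ1
  refine le_trans (mul_le_mul' h1 h2) ?_
  rw [← ENNReal.ofReal_mul (by positivity)]
  apply ENNReal.ofReal_le_ofReal
  have hsqpos : (0:ℝ) < Real.sqrt (2*(k:ℝ)) := Real.sqrt_pos.mpr (by linarith)
  have h4 : ((1:ℝ)/4)^k * 4^k = 1 := by rw [← mul_pow]; norm_num
  have hLinv : L⁻¹ = Real.sqrt (2*(k:ℝ)) * 4^k * Real.exp 1 := by
    apply inv_eq_of_mul_eq_one_right
    calc L * (Real.sqrt (2*(k:ℝ)) * 4^k * Real.exp 1)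
        = (1/Real.sqrt (2*(k:ℝ)) * Real.sqrt (2*(k:ℝ))) * (((1:ℝ)/4)^k * 4^k) *
            (Real.exp (-(1:ℝ)) * Real.exp 1) := by rw [hL]; ring
      _ = 1 := by
          rw [one_div_mul_cancel hsqpos.ne', h4, ← Real.exp_add]; norm_num
  rw [hLinv]
  apply le_of_eq
  have hmerge : Real.sqrt (2*(k:ℝ)) * Real.sqrt (π / (4*θ*k)) = Real.sqrt (π/(2*θ)) := by
    rw [← Real.sqrt_mul (by linarith)]
    congr 1
    field_simp
    ring
  have h4 : ((1:ℝ)/4)^k * 4^k = 1 := by rw [← mul_pow]; norm_num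
  calc Real.sqrt (2*(k:ℝ)) * 4^k * Real.exp 1 *
        ((1/4)^k * Real.exp (-((1-θ)*(4*(k:ℝ))*τ^2)) * Real.sqrt (π / (4*θ*k)))
      = ((1:ℝ)/4)^k * 4^k * (Real.exp 1 *
          (Real.sqrt (2*(k:ℝ)) * Real.sqrt (π / (4*θ*k))) * Real.exp (-((1-θ)*(4*(k:ℝ))*τ^2))) := by
        ring
    _ = Real.exp 1 * Real.sqrt (π/(2*θ)) * Real.exp (-((1-θ)*(4*(k:ℝ))*τ^2)) := by
        rw [h4, hmerge]; ring

lemma mass_lower (k : ℕ) (hk : 1 ≤ k) (a b : ℝ) (hab : a ≤ b) (h0 : 0 ≤ a) (h1 : b ≤ 1) (ζ : ℝ)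
    (hζ : ∀ y ∈ Icc a b, 4*(y-1/2)^2 ≤ ζ) (hζ2 : ζ ≤ 1/2) (hζ0 : 0 ≤ ζ) :
    ENNReal.ofReal ((b-a) * Real.sqrt ((4*(k:ℝ))/π) * Real.exp (-((k:ℝ)*(ζ + 2*ζ^2))))
      ≤ betaM (k+1) (k+1) (Subtype.val ⁻¹' Icc a b) := by
  have hk' : (1:ℝ) ≤ (k:ℝ) := by exact_mod_cast hk
  have hkpos : (0:ℝ) < k := by linarith
  rw [betaM_pre k _ measurableSet_Icc]
  have hsub : Icc a b ∩ Icc (0:ℝ) 1 = Icc a b :=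
    Set.inter_eq_left.mpr (Icc_subset_Icc h0 h1)
  rw [hsub]
  set Du : ℝ := (1/4)^k * Real.sqrt (π / (4*(k:ℝ))) with hDu
  have hDupos : 0 < Du := by positivity
  have h1' : ENNReal.ofReal Du⁻¹ ≤ (∫⁻ y in Icc (0:ℝ) 1, Fd k y)⁻¹ := by
    rw [ENNReal.ofReal_inv_of_pos hDupos]
    exact ENNReal.inv_le_inv' (D_upper k hk)
  have h2' := interval_lower k a b hab h0 h1 ζ hζ hζ2 hζ0
  refine le_trans ?_ (mul_le_mul' h1' h2')
  rw [← ENNReal.ofReal_mul (by positivity)]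
  apply ENNReal.ofReal_le_ofReal
  have h4 : ((1:ℝ)/4)^k * 4^k = 1 := by rw [← mul_pow]; norm_num
  have hDuinv : Du⁻¹ = 4^k * Real.sqrt ((4*(k:ℝ))/π) := by
    apply inv_eq_of_mul_eq_one_right
    calc Du * (4^k * Real.sqrt ((4*(k:ℝ))/π))
        = (((1:ℝ)/4)^k * 4^k) * (Real.sqrt (π/(4*(k:ℝ))) * Real.sqrt ((4*(k:ℝ))/π)) := by
          rw [hDu]; ring
      _ = 1 := by
          rw [h4, ← Real.sqrt_mul (by positivity), one_mul]
          rw [show (π/(4*(k:ℝ))) * ((4*(k:ℝ))/π) = 1 by field_simp]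
          exact Real.sqrt_one
  rw [hDuinv]
  apply le_of_eq
  calc (b-a) * Real.sqrt ((4*(k:ℝ))/π) * Real.exp (-((k:ℝ)*(ζ + 2*ζ^2)))
      = ((1:ℝ)/4)^k * 4^k * ((b-a) * Real.sqrt ((4*(k:ℝ))/π) * Real.exp (-((k:ℝ)*(ζ + 2*ζ^2)))) := by
        rw [h4]; ring
    _ = 4^k * Real.sqrt ((4*(k:ℝ))/π) * ((b-a) * ((1/4)^k * Real.exp (-((k:ℝ)*(ζ + 2*ζ^2))))) := by
        ring

lemma kdiv_tendsto (l : ℕ) :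
    Tendsto (fun n : ℕ => ((n - l - 1 : ℕ) : ℝ)/(n:ℝ)) atTop (𝓝 1) := by
  have h1 : Tendsto (fun n : ℕ => 1 - ((l:ℝ)+1)*(1/(n:ℝ))) atTop (𝓝 1) := by
    have := (tendsto_one_div_atTop_nhds_zero_nat).const_mul ((l:ℝ)+1)
    have h2 := (tendsto_const_nhds (x := (1:ℝ)) (f := atTop (α := ℕ))).sub this
    simpa using h2
  apply h1.congr'
  filter_upwards [eventually_ge_atTop (l+2)] with n hn
  have hn0 : (0:ℝ) < (n:ℝ) := by
    have : 0 < n := by omega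
    exact_mod_cast this
  have hcast : ((n - l - 1 : ℕ) : ℝ) = (n:ℝ) - ((l:ℝ)+1) := by
    have : n - l - 1 = n - (l+1) := by omega
    rw [this, Nat.cast_sub (by omega)]
    push_cast; ring
  rw [hcast]
  field_simp

lemma ulogu_tendsto (u : ℕ → ℝ) (hu_pos : ∀ n, 0 < u n) (hu0 : Tendsto u atTop (𝓝 0)) :
    Tendsto (fun n => u n * Real.log (u n)) atTop (𝓝 0) := by
  have h : Tendsto u atTop (𝓝[>] 0) :=
    tendsto_nhdsWithin_of_tendsto_nhds_of_eventually_within _ hu0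
      (Eventually.of_forall hu_pos)
  have := (tendsto_log_mul_rpow_nhdsGT_zero one_pos).comp h
  simpa [Function.comp_def, mul_comm] using this

lemma invnu_tendsto (u : ℕ → ℝ) (hnu : Tendsto (fun n : ℕ => (n : ℝ) * u n) atTop atTop) :
    Tendsto (fun n : ℕ => 1/((n:ℝ) * u n)) atTop (𝓝 0) := by
  have h := tendsto_inv_atTop_zero.comp hnu
  rw [show ((fun r : ℝ => r⁻¹) ∘ fun n : ℕ => (n:ℝ) * u n) = fun n : ℕ => 1/((n:ℝ) * u n) from
    funext fun n => by simp [one_div]] at h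
  exact h

lemma claim_base (l : ℕ) (u : ℕ → ℝ) (hu_pos : ∀ n, 0 < u n) (A : Set ℝ) :
    limsup (fun n => ((u n : ℝ) : EReal) * ENNReal.log (betaM (n - l) (n - l)
      ((fun y : I01 => Real.sqrt ((n : ℝ) * u n) * ((y : ℝ) - 1 / 2)) ⁻¹' A))) atTop
      ≤ (0 : EReal) := by
  have hev : ∀ᶠ n in atTop, ((u n : ℝ) : EReal) * ENNReal.log (betaM (n - l) (n - l)
      ((fun y : I01 => Real.sqrt ((n : ℝ) * u n) * ((y : ℝ) - 1 / 2)) ⁻¹' A)) ≤ (0 : EReal) := by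
    filter_upwards [eventually_ge_atTop (l+2)] with n hn
    have hnl : n - l = (n - l - 1) + 1 := by omega
    rw [hnl]
    have h1 : ENNReal.log (betaM ((n-l-1)+1) ((n-l-1)+1)
        ((fun y : I01 => Real.sqrt ((n : ℝ) * u n) * ((y : ℝ) - 1 / 2)) ⁻¹' A)) ≤ 0 := by
      rw [← ENNReal.log_one]
      exact ENNReal.log_monotone (betaM_le_one _ _)
    calc ((u n : ℝ) : EReal) * ENNReal.log _ ≤ ((u n : ℝ) : EReal) * 0 :=
          mul_le_mul_of_nonneg_left h1 (EReal.coe_nonneg.mpr (hu_pos n).le)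
      _ = 0 := mul_zero _
  calc limsup _ atTop ≤ limsup (fun _ : ℕ => (0 : EReal)) atTop := limsup_le_limsup hev
    _ = 0 := limsup_const _

lemma claim_up (l : ℕ) (u : ℕ → ℝ) (hu_pos : ∀ n, 0 < u n) (hu0 : Tendsto u atTop (𝓝 0))
    (A : Set ℝ) (c θ : ℝ) (hc : 0 ≤ c) (hθ : 0 < θ) (hθ1 : θ ≤ 1)
    (hA : ∀ x ∈ A, c ≤ 4*x^2) :
    limsup (fun n => ((u n : ℝ) : EReal) * ENNReal.log (betaM (n - l) (n - l)
      ((fun y : I01 => Real.sqrt ((n : ℝ) * u n) * ((y : ℝ) - 1 / 2)) ⁻¹' A))) atTop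
      ≤ ((-( (1-θ)*c) : ℝ) : EReal) := by
  set C : ℝ := Real.exp 1 * Real.sqrt (π/(2*θ)) with hC
  have hCpos : 0 < C := by
    rw [hC]
    have : (0:ℝ) < Real.sqrt (π/(2*θ)) := Real.sqrt_pos.mpr (by positivity)
    positivity
  set g : ℕ → ℝ := fun n => u n * Real.log C - (1-θ)*c*(((n - l - 1 : ℕ) : ℝ)/(n:ℝ)) with hg
  have hgl : Tendsto g atTop (𝓝 (-( (1-θ)*c))) := by
    have h1 : Tendsto (fun n => u n * Real.log C) atTop (𝓝 0) := by
      simpa using hu0.mul_const (Real.log C)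
    have h2 := (kdiv_tendsto l).const_mul ((1-θ)*c)
    have := h1.sub h2
    simpa using this
  have hev : ∀ᶠ n in atTop, ((u n : ℝ) : EReal) * ENNReal.log (betaM (n - l) (n - l)
      ((fun y : I01 => Real.sqrt ((n : ℝ) * u n) * ((y : ℝ) - 1 / 2)) ⁻¹' A)) ≤ ((g n : ℝ) : EReal) := by
    filter_upwards [eventually_ge_atTop (l+2)] with n hn
    have hk1 : 1 ≤ n - l - 1 := by omega
    have hk' : (1:ℝ) ≤ ((n - l - 1 : ℕ):ℝ) := by exact_mod_cast hk1
    have hnpos : (0:ℝ) < (n:ℝ) := by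
      have : 0 < n := by omega
      exact_mod_cast this
    have hnupos : (0:ℝ) < (n:ℝ) * u n := mul_pos hnpos (hu_pos n)
    set s : ℝ := Real.sqrt ((n:ℝ) * u n) with hsdef
    have hspos : 0 < s := Real.sqrt_pos.mpr hnupos
    have hs2 : s^2 = (n:ℝ) * u n := Real.sq_sqrt hnupos.le
    set τ : ℝ := Real.sqrt c / (2*s) with hτdef
    have hτ0 : 0 ≤ τ := by positivity
    have hτsq : τ^2 = c/(4*((n:ℝ)*u n)) := by
      rw [hτdef, div_pow, Real.sq_sqrt hc, mul_pow, hs2]; norm_num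
    have hsub : ((fun y : I01 => s * ((y : ℝ) - 1 / 2)) ⁻¹' A)
        ⊆ {x : I01 | τ ≤ |(x:ℝ) - 1/2|} := by
      intro y hy
      have hcy := hA _ hy
      have h2 : (2*s*|(y:ℝ)-1/2|)^2 = 4*(s*((y:ℝ)-1/2))^2 := by
        rw [mul_pow, mul_pow, sq_abs]; ring
      have h3 := Real.sqrt_le_sqrt hcy
      rw [← h2, Real.sqrt_sq (by positivity)] at h3
      simp only [Set.mem_setOf_eq, hτdef]
      rw [div_le_iff₀ (by positivity)]
      linarith
    have hnl : n - l = (n - l - 1) + 1 := by omega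
    have hmass : betaM (n - l) (n - l)
        ((fun y : I01 => Real.sqrt ((n : ℝ) * u n) * ((y : ℝ) - 1 / 2)) ⁻¹' A)
        ≤ ENNReal.ofReal (C * Real.exp (-((1-θ)*(4*((n-l-1 : ℕ):ℝ))*τ^2))) := by
      rw [hnl]
      refine le_trans (measure_mono hsub) ?_
      rw [hC, mul_assoc]
      rw [← mul_assoc]
      exact mass_upper (n-l-1) hk1 τ θ hτ0 hθ hθ1
    set B : ℝ := C * Real.exp (-((1-θ)*(4*((n-l-1 : ℕ):ℝ))*τ^2)) with hB
    have hBpos : 0 < B := by positivity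
    have hlog : ENNReal.log (betaM (n - l) (n - l)
        ((fun y : I01 => Real.sqrt ((n : ℝ) * u n) * ((y : ℝ) - 1 / 2)) ⁻¹' A))
        ≤ ((Real.log B : ℝ) : EReal) := by
      refine le_trans (ENNReal.log_monotone hmass) ?_
      rw [ENNReal.log_ofReal_of_pos hBpos]
    calc ((u n : ℝ) : EReal) * ENNReal.log _ ≤ ((u n : ℝ) : EReal) * ((Real.log B : ℝ) : EReal) :=
          mul_le_mul_of_nonneg_left hlog (EReal.coe_nonneg.mpr (hu_pos n).le)
      _ = ((u n * Real.log B : ℝ) : EReal) := by rw [EReal.coe_mul]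
      _ = ((g n : ℝ) : EReal) := by
          congr 1
          rw [hB, Real.log_mul hCpos.ne' (Real.exp_pos _).ne', Real.log_exp, hg]
          have : u n * ((1-θ)*(4*((n-l-1 : ℕ):ℝ))*τ^2) = (1-θ)*c*(((n - l - 1 : ℕ) : ℝ)/(n:ℝ)) := by
            rw [hτsq]
            field_simp [(hu_pos n).ne']
          ring_nf
          ring_nf at this
          linarith [this]
  calc limsup _ atTop ≤ limsup (fun n => ((g n : ℝ) : EReal)) atTop := limsup_le_limsup hev
    _ = ((-( (1-θ)*c) : ℝ) : EReal) := (EReal.tendsto_coe.mpr hgl).limsup_eq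

set_option maxHeartbeats 2000000 in
lemma claim_low (l : ℕ) (u : ℕ → ℝ) (hu_pos : ∀ n, 0 < u n) (hu0 : Tendsto u atTop (𝓝 0))
    (hnu : Tendsto (fun n : ℕ => (n : ℝ) * u n) atTop atTop)
    (A : Set ℝ) (x : ℝ) (hx : x ∈ interior A) (c : ℝ) (hc : 4*x^2 < c) :
    ((-c : ℝ) : EReal) ≤ liminf (fun n => ((u n : ℝ) : EReal) * ENNReal.log (betaM (n - l) (n - l)
      ((fun y : I01 => Real.sqrt ((n : ℝ) * u n) * ((y : ℝ) - 1 / 2)) ⁻¹' A))) atTop := by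
  obtain ⟨r₀, hr₀pos, hball⟩ : ∃ r₀ > 0, Metric.ball x r₀ ⊆ A :=
    Metric.mem_nhds_iff.mp (mem_interior_iff_mem_nhds.mp hx)
  have hc0 : 0 ≤ c := le_of_lt (lt_of_le_of_lt (by positivity) hc)
  have hsx : 2*|x| < Real.sqrt c := by
    rw [show (2*|x|) = Real.sqrt ((2*|x|)^2) from (Real.sqrt_sq (by positivity)).symm]
    apply Real.sqrt_lt_sqrt (by positivity)
    rw [mul_pow, sq_abs]; linarith
  set r' : ℝ := min (r₀/2) ((Real.sqrt c - 2*|x|)/2) with hr'def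
  have hr'pos : 0 < r' := lt_min (by linarith) (by linarith)
  have hr'lt : r' < r₀ := lt_of_le_of_lt (min_le_left _ _) (by linarith)
  set M : ℝ := |x| + r' with hMdef
  have hMpos : 0 < M := by positivity
  have hMc : 4*M^2 ≤ c := by
    have h1 : r' ≤ (Real.sqrt c - 2*|x|)/2 := min_le_right _ _
    have h2 : 2*M ≤ Real.sqrt c := by rw [hMdef]; linarith
    have h3 := Real.sq_sqrt hc0
    nlinarith [abs_nonneg x]
  obtain ⟨c₁, hq1, hq2, hq3, hq4⟩ :
      ∃ t : ℝ, -M ≤ t ∧ t + r' ≤ M ∧ x - r₀ < t ∧ t + r' < x + r₀ := by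
    have hx1 : -|x| ≤ x := neg_abs_le x
    have hx2 : x ≤ |x| := le_abs_self x
    rcases lt_or_ge x 0 with h|h
    · exact ⟨x - r', by rw [hMdef]; linarith, by rw [hMdef]; linarith,
        by linarith, by linarith⟩
    · exact ⟨x, by rw [hMdef]; linarith, by rw [hMdef]; linarith,
        by linarith, by linarith⟩
  set g : ℕ → ℝ := fun n =>
    u n * Real.log r' + (1/2)*(u n * Real.log ((4*((n - l - 1 : ℕ):ℝ))/(π*(n:ℝ))))
      - (1/2)*(u n * Real.log (u n))
      - (4*M^2*(((n - l - 1 : ℕ):ℝ)/(n:ℝ)) + 32*M^4*(((n - l - 1 : ℕ):ℝ)/(n:ℝ))*(1/((n:ℝ)*u n)))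
    with hgdef
  have hgl : Tendsto g atTop (𝓝 (-(4*M^2))) := by
    have h1 : Tendsto (fun n => u n * Real.log r') atTop (𝓝 0) := by
      simpa using hu0.mul_const (Real.log r')
    have h2 : Tendsto (fun n : ℕ => u n * Real.log ((4*((n - l - 1 : ℕ):ℝ))/(π*(n:ℝ)))) atTop
        (𝓝 0) := by
      have ha : Tendsto (fun n : ℕ => (4*((n - l - 1 : ℕ):ℝ))/(π*(n:ℝ))) atTop (𝓝 (4/π)) := by
        have h := (kdiv_tendsto l).const_mul (4/π)
        rw [mul_one] at h
        apply h.congr'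
        filter_upwards [eventually_ge_atTop 1] with n hn
        have hnpos : (0:ℝ) < (n:ℝ) := by exact_mod_cast hn
        field_simp
      have hb : Tendsto (fun n : ℕ => Real.log ((4*((n - l - 1 : ℕ):ℝ))/(π*(n:ℝ)))) atTop
          (𝓝 (Real.log (4/π))) :=
        ((Real.continuousAt_log (by positivity)).tendsto).comp ha
      simpa using hu0.mul hb
    have h3 := ulogu_tendsto u hu_pos hu0
    have h4 : Tendsto (fun n : ℕ => 4*M^2*(((n - l - 1 : ℕ):ℝ)/(n:ℝ))
        + 32*M^4*(((n - l - 1 : ℕ):ℝ)/(n:ℝ))*(1/((n:ℝ)*u n))) atTop (𝓝 (4*M^2)) := by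
      have ha := (kdiv_tendsto l).const_mul (4*M^2)
      have hb := ((kdiv_tendsto l).const_mul (32*M^4)).mul (invnu_tendsto u hnu)
      have hcomb := ha.add hb
      rw [mul_one] at hcomb
      simpa using hcomb
    have hcomb := ((h1.add (h2.const_mul (1/2))).sub (h3.const_mul (1/2))).sub h4
    rw [hgdef]
    have : (0 + (1/2)*0 - (1/2)*0 - 4*M^2 : ℝ) = -(4*M^2) := by ring
    rw [← this]
    apply hcomb.congr
    intro n; ring
  have hev : ∀ᶠ n in atTop, ((g n : ℝ) : EReal) ≤ ((u n : ℝ) : EReal) * ENNReal.log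
      (betaM (n - l) (n - l)
        ((fun y : I01 => Real.sqrt ((n : ℝ) * u n) * ((y : ℝ) - 1 / 2)) ⁻¹' A)) := by
    filter_upwards [eventually_ge_atTop (l+2), hnu.eventually_ge_atTop (8*M^2)] with n hn hnu8
    have hk1 : 1 ≤ n - l - 1 := by omega
    have hk' : (1:ℝ) ≤ ((n - l - 1 : ℕ):ℝ) := by exact_mod_cast hk1
    have hnpos : (0:ℝ) < (n:ℝ) := by
      have : 0 < n := by omega
      exact_mod_cast this
    have hnupos : (0:ℝ) < (n:ℝ) * u n := mul_pos hnpos (hu_pos n)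
    set s : ℝ := Real.sqrt ((n:ℝ) * u n) with hsdef
    have hspos : 0 < s := Real.sqrt_pos.mpr hnupos
    have hs2 : s^2 = (n:ℝ) * u n := Real.sq_sqrt hnupos.le
    have hsM : 2*M ≤ s := by
      rw [hsdef, show (2*M) = Real.sqrt ((2*M)^2) from (Real.sqrt_sq (by positivity)).symm]
      apply Real.sqrt_le_sqrt
      nlinarith
    have hdivM : M/s ≤ 1/2 := by rw [div_le_div_iff₀ hspos (by norm_num)]; linarith
    set ζ : ℝ := 4*M^2/((n:ℝ)*u n) with hζdef
    have hζ0 : 0 ≤ ζ := by positivity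
    have hζhalf : ζ ≤ 1/2 := by
      rw [hζdef, div_le_div_iff₀ hnupos (by norm_num)]; nlinarith
    set a : ℝ := 1/2 + c₁/s with hadef
    set b : ℝ := 1/2 + (c₁ + r')/s with hbdef
    have hdiv1 : -(M/s) ≤ c₁/s := by
      rw [← neg_div]
      exact (div_le_div_iff_of_pos_right hspos).mpr hq1
    have hdiv2 : (c₁+r')/s ≤ M/s := (div_le_div_iff_of_pos_right hspos).mpr hq2
    have hdiv3 : c₁/s ≤ (c₁+r')/s := (div_le_div_iff_of_pos_right hspos).mpr (by linarith)
    have hab : a ≤ b := by rw [hadef, hbdef]; linarith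
    have h0a : 0 ≤ a := by rw [hadef]; linarith
    have h1b : b ≤ 1 := by rw [hbdef]; linarith
    have hζb : ∀ y ∈ Icc a b, 4*(y-1/2)^2 ≤ ζ := by
      intro y hy
      obtain ⟨hy1, hy2⟩ := hy
      rw [hadef] at hy1; rw [hbdef] at hy2
      have hsq : (y - 1/2)^2 ≤ (M/s)^2 := sq_le_sq' (by linarith) (by linarith)
      have : (M/s)^2 = M^2/((n:ℝ)*u n) := by rw [div_pow, hs2]
      rw [this] at hsq
      rw [hζdef]
      rw [show 4*M^2/((n:ℝ)*u n) = 4*(M^2/((n:ℝ)*u n)) by ring]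
      linarith
    have hincl : (Subtype.val ⁻¹' Icc a b : Set I01)
        ⊆ ((fun y : I01 => Real.sqrt ((n : ℝ) * u n) * ((y : ℝ) - 1 / 2)) ⁻¹' A) := by
      intro y hy
      obtain ⟨hy1, hy2⟩ := hy
      rw [hadef] at hy1; rw [hbdef] at hy2
      have h5 : c₁ ≤ s*((y:ℝ) - 1/2) := by
        rw [mul_comm, ← div_le_iff₀ hspos]
        linarith
      have h6 : s*((y:ℝ)-1/2) ≤ c₁ + r' := by
        rw [mul_comm, ← le_div_iff₀ hspos]
        linarith
      apply hball
      rw [Real.ball_eq_Ioo]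
      exact ⟨by simp only [← hsdef]; linarith, by simp only [← hsdef]; linarith⟩
    set L : ℝ := (r'/s) * Real.sqrt ((4*((n - l - 1 : ℕ):ℝ))/π)
        * Real.exp (-(((n - l - 1 : ℕ):ℝ)*(ζ + 2*ζ^2))) with hLdef
    have hsqkpos : (0:ℝ) < Real.sqrt ((4*((n - l - 1 : ℕ):ℝ))/π) :=
      Real.sqrt_pos.mpr (by positivity)
    have hLpos : 0 < L := by positivity
    have hnl : n - l = (n - l - 1) + 1 := by omega
    have hmass : ENNReal.ofReal L ≤ betaM (n - l) (n - l)
        ((fun y : I01 => Real.sqrt ((n : ℝ) * u n) * ((y : ℝ) - 1 / 2)) ⁻¹' A) := by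
      rw [hnl]
      refine le_trans ?_ (measure_mono hincl)
      have hml := mass_lower (n-l-1) hk1 a b hab h0a h1b ζ hζb hζhalf hζ0
      have hba : b - a = r'/s := by rw [hadef, hbdef]; ring
      rw [hba] at hml
      exact hml
    have hlog : ((Real.log L : ℝ) : EReal) ≤ ENNReal.log (betaM (n - l) (n - l)
        ((fun y : I01 => Real.sqrt ((n : ℝ) * u n) * ((y : ℝ) - 1 / 2)) ⁻¹' A)) := by
      refine le_trans ?_ (ENNReal.log_monotone hmass)
      rw [ENNReal.log_ofReal_of_pos hLpos]
    have hstep : ((g n : ℝ) : EReal) ≤ ((u n * Real.log L : ℝ) : EReal) := by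
      apply EReal.coe_le_coe_iff.mpr
      apply le_of_eq
      -- expand log L
      have e0 : Real.log L = Real.log r' - Real.log ((n:ℝ)*u n)/2
          + Real.log ((4*((n - l - 1 : ℕ):ℝ))/π)/2 - ((n - l - 1 : ℕ):ℝ)*(ζ + 2*ζ^2) := by
        rw [hLdef, Real.log_mul (by positivity) (Real.exp_pos _).ne',
          Real.log_mul (by positivity) hsqkpos.ne', Real.log_exp,
          Real.log_div hr'pos.ne' hspos.ne', hsdef, Real.log_sqrt hnupos.le,
          Real.log_sqrt (by positivity)]
        ring
      have e1 : Real.log ((4*((n - l - 1 : ℕ):ℝ))/π) - Real.log ((n:ℝ)*u n)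
          = Real.log ((4*((n - l - 1 : ℕ):ℝ))/(π*(n:ℝ))) - Real.log (u n) := by
        rw [Real.log_div (by positivity) (by positivity),
          Real.log_mul hnpos.ne' (hu_pos n).ne',
          Real.log_div (by positivity) (by positivity),
          Real.log_mul (by positivity) hnpos.ne']
        ring
      have e2 : u n * (((n - l - 1 : ℕ):ℝ)*(ζ + 2*ζ^2))
          = 4*M^2*(((n - l - 1 : ℕ):ℝ)/(n:ℝ)) + 32*M^4*(((n - l - 1 : ℕ):ℝ)/(n:ℝ))*(1/((n:ℝ)*u n)) := by
        rw [hζdef]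
        field_simp [(hu_pos n).ne']
        ring
      rw [hgdef]
      simp only []
      rw [e0]
      have expand : u n * (Real.log r' - Real.log ((n:ℝ)*u n)/2
          + Real.log ((4*((n - l - 1 : ℕ):ℝ))/π)/2 - ((n - l - 1 : ℕ):ℝ)*(ζ + 2*ζ^2))
          = u n * Real.log r'
            + (1/2)*(u n * (Real.log ((4*((n - l - 1 : ℕ):ℝ))/π) - Real.log ((n:ℝ)*u n)))
            - u n * (((n - l - 1 : ℕ):ℝ)*(ζ + 2*ζ^2)) := by ring
      rw [expand, e1, e2]
      ring
    calc ((g n : ℝ) : EReal) ≤ ((u n * Real.log L : ℝ) : EReal) := hstep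
      _ = ((u n : ℝ) : EReal) * ((Real.log L : ℝ) : EReal) := EReal.coe_mul _ _
      _ ≤ _ := mul_le_mul_of_nonneg_left hlog (EReal.coe_nonneg.mpr (hu_pos n).le)
  calc ((-c : ℝ) : EReal) ≤ ((-(4*M^2) : ℝ) : EReal) := EReal.coe_le_coe_iff.mpr (by linarith)
    _ = liminf (fun n => ((g n : ℝ) : EReal)) atTop := ((EReal.tendsto_coe.mpr hgl).liminf_eq).symm
    _ ≤ _ := liminf_le_liminf hev

end Stmt8Proof
end

section Statements
open MeasureTheory Filter Topology Matrix ProbabilityTheory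
open scoped ENNReal NNReal

theorem stmt8 (l : ℕ) (u : ℕ → ℝ) (hu_pos : ∀ n, 0 < u n) (hu_anti : Antitone u)
    (hu0 : Tendsto u atTop (𝓝 0)) (hnu : Tendsto (fun n : ℕ => (n : ℝ) * u n) atTop atTop) :
    IsLDP
      (fun n A => betaM (n - l) (n - l)
        ((fun y : I01 => Real.sqrt ((n : ℝ) * u n) * ((y : ℝ) - 1 / 2)) ⁻¹' A))
      u (fun x : ℝ => ((4 * x ^ 2 : ℝ) : EReal)) ∧
    GoodRate (fun x : ℝ => ((4 * x ^ 2 : ℝ) : EReal)) := by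
  constructor
  · constructor
    · exact (continuous_coe_real_ereal.comp (by continuity)).lowerSemicontinuous
    · intro A
      constructor
      · -- lower bound
        rw [EReal.neg_le]
        refine le_iInf fun x => le_iInf fun hx => ?_
        rw [← EReal.neg_le, show -((4 * x ^ 2 : ℝ) : EReal) = ((-(4 * x ^ 2) : ℝ) : EReal) from
          (EReal.coe_neg _).symm]
        by_contra h
        push_neg at h
        obtain ⟨q, hq1, hq2⟩ := EReal.exists_between_coe_real h
        have hq2' : q < -(4 * x ^ 2) := EReal.coe_lt_coe_iff.mp hq2
        have := Stmt8Proof.claim_low l u hu_pos hu0 hnu A x hx (-q) (by nlinarith)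
        rw [neg_neg] at this
        exact absurd (lt_of_le_of_lt this hq1) (lt_irrefl _)
      · -- upper bound
        by_contra h
        push_neg at h
        set Λ := limsup (fun n => ((u n : ℝ) : EReal) * ENNReal.log (betaM (n - l) (n - l)
          ((fun y : I01 => Real.sqrt ((n : ℝ) * u n) * ((y : ℝ) - 1 / 2)) ⁻¹' A))) atTop with hΛ
        have hΛ0 : Λ ≤ 0 := Stmt8Proof.claim_base l u hu_pos A
        obtain ⟨q, hq1, hq2⟩ := EReal.exists_between_coe_real h
        obtain ⟨p, hp1, hp2⟩ := EReal.exists_between_coe_real hq2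
        have hq0 : q < 0 := by
          have := lt_of_lt_of_le hq2 hΛ0
          exact_mod_cast this
        set c : ℝ := -q with hcdef
        have hcpos : 0 < c := by rw [hcdef]; linarith
        have hqp : q < p := EReal.coe_lt_coe_iff.mp hp1
        have hAc : ∀ y ∈ A, c ≤ 4*y^2 := by
          intro y hy
          have h1 : (⨅ x ∈ closure A, ((4 * x ^ 2 : ℝ) : EReal)) ≤ ((4 * y ^ 2 : ℝ) : EReal) :=
            iInf₂_le y (subset_closure hy)
          have h2 : ((c : ℝ) : EReal) < ⨅ x ∈ closure A, ((4 * x ^ 2 : ℝ) : EReal) := by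
            have h3 := EReal.neg_lt_of_neg_lt hq1
            rw [show -((q:ℝ):EReal) = ((-q : ℝ) : EReal) from (EReal.coe_neg _).symm] at h3
            exact h3
          have := lt_of_lt_of_le h2 h1
          have := EReal.coe_lt_coe_iff.mp this
          linarith
        set θ : ℝ := min (1/2) ((p - q)/(2*c)) with hθdef
        have hθpos : 0 < θ := lt_min (by norm_num) (div_pos (by linarith) (by linarith))
        have hθ1 : θ ≤ 1 := le_trans (min_le_left _ _) (by norm_num)
        clear_value c θ
        have hkey := Stmt8Proof.claim_up l u hu_pos hu0 A c θ hcpos.le hθpos hθ1 hAc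
        rw [← hΛ] at hkey
        have harith : -( (1-θ)*c) < p := by
          have h5 : θ*c ≤ (p-q)/2 := by
            have h6 : θ ≤ (p - q)/(2*c) := by rw [hθdef]; exact min_le_right _ _
            have := mul_le_mul_of_nonneg_right h6 hcpos.le
            rw [div_mul_eq_mul_div, mul_comm] at this
            calc θ*c ≤ (p-q)*c/(2*c) := by linarith [this]
              _ = (p-q)/2 := by field_simp
          have heq : -( (1-θ)*c) = q + θ*c := by rw [hcdef]; ring
          rw [heq]
          linarith
        have : Λ < Λ := lt_of_le_of_lt hkey (lt_trans (EReal.coe_lt_coe_iff.mpr harith) hp2)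
        exact absurd this (lt_irrefl _)
  · -- GoodRate
    intro a
    have hset : {x : ℝ | ((4 * x ^ 2 : ℝ) : EReal) ≤ (a : EReal)} = {x : ℝ | 4 * x ^ 2 ≤ a} := by
      ext x; exact EReal.coe_le_coe_iff
    rw [hset]
    apply IsCompact.of_isClosed_subset (isCompact_Icc (a := -Real.sqrt a) (b := Real.sqrt a))
    · exact isClosed_le (by continuity) continuous_const
    · intro x hx
      simp only [Set.mem_setOf_eq] at hx
      have h1 : x^2 ≤ a := by nlinarith [sq_nonneg x]
      have h2 : |x| ≤ Real.sqrt a := Real.abs_le_sqrt h1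
      exact abs_le.mp h2


end Statements
end
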